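/- For the family of instances with u − v = (1, 2, 3, ..., k−1, k, k−1, ..., 3, 2, 1) (dimension n = 2k−1) and u, v without null positions where no entry of u drops to zero during the process, dist_any(u,v) ≤ k: there is a sequence of k events transforming u into v, each event reducing the number of maximal flat intervals of the difference vector by 2. -/

import Mathlib

open scoped ENat

/-- A copy-number profile of dimension `n`: positions are `Fin n` (position `i+1` in 1-based terms),
values are non-negative integers. -/
abbrev CNP (n : ℕ) := Fin n → ℕ

/-- An event `(s, t, δ)`: affects 1-based positions in `[s, t]`, changing copy numbers by `δ`. -/
abbrev Event := ℕ × ℕ × ℤ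

/-- A valid event has `1 ≤ s ≤ t ≤ n` and `δ ≠ 0`. -/
def ValidEvent (n : ℕ) (e : Event) : Prop :=
  1 ≤ e.1 ∧ e.1 ≤ e.2.1 ∧ e.2.1 ≤ n ∧ e.2.2 ≠ 0

/-- Applying event `e = (s,t,δ)` to `u` : each 1-based position `i ∈ [s,t]` with `u_i > 0`
becomes `max(u_i + δ, 0)`; other positions are unchanged. -/
def applyEvent {n : ℕ} (u : CNP n) (e : Event) : CNP n :=
  fun i => if e.1 ≤ (i : ℕ) + 1 ∧ (i : ℕ) + 1 ≤ e.2.1 ∧ 0 < u i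
    then ((u i : ℤ) + e.2.2).toNat else u i

/-- Applying a sequence of events in order. -/
def applySeq {n : ℕ} (u : CNP n) (E : List Event) : CNP n :=
  E.foldl applyEvent u

/-- Cost of applying event `e` on `u` w.r.t. cost function `f`:
the maximum of `f (u_i) δ` over affected positions `i ∈ [s,t]`. -/
noncomputable def eventCost {n : ℕ} (f : ℕ → ℤ → ℕ∞) (u : CNP n) (e : Event) : ℕ∞ :=
  (Finset.univ.filter (fun i : Fin n => e.1 ≤ (i : ℕ) + 1 ∧ (i : ℕ) + 1 ≤ e.2.1)).sup
    (fun i => f (u i) e.2.2)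

/-- Total cost of applying a sequence of events, costs evaluated on successive profiles. -/
noncomputable def seqCost {n : ℕ} (f : ℕ → ℤ → ℕ∞) : CNP n → List Event → ℕ∞
  | _, [] => 0
  | u, e :: E => eventCost f u e + seqCost f (applyEvent u e) E

/-- `dist_f(u,v)`: minimum total cost of a sequence of valid events transforming `u` into `v`
(`⊤` if no such sequence exists). -/
noncomputable def distf {n : ℕ} (f : ℕ → ℤ → ℕ∞) (u v : CNP n) : ℕ∞ :=
  sInf { c | ∃ E : List Event, (∀ e ∈ E, ValidEvent n e) ∧ applySeq u E = v ∧ seqCost f u E = c }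

/-- A unit-cost function takes only values `1` and `∞`. -/
def UnitCost (f : ℕ → ℤ → ℕ∞) : Prop := ∀ c δ, f c δ = 1 ∨ f c δ = ⊤

/-- The most permissive cost function: every event costs `1`. -/
def anyCost : ℕ → ℤ → ℕ∞ := fun _ _ => 1

/-- `dist_any(u,v)`: minimum number of events transforming `u` into `v`. -/
noncomputable def distAny {n : ℕ} (u v : CNP n) : ℕ∞ := distf anyCost u v

/-- The difference vector `w = u - v` in 1-based indexing, extended by `w_0 = w_{n+1} = 0`. -/
def diffExt {n : ℕ} (u v : CNP n) (i : ℕ) : ℤ :=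
  if h : 1 ≤ i ∧ i ≤ n then (u ⟨i - 1, by omega⟩ : ℤ) - (v ⟨i - 1, by omega⟩ : ℤ) else 0

/-- `[a,b] ⊆ [0, n+1]` is a flat interval of `w` if `w` is constant on it. -/
def IsFlat (n : ℕ) (w : ℕ → ℤ) (a b : ℕ) : Prop :=
  a ≤ b ∧ b ≤ n + 1 ∧ ∀ i j, a ≤ i → i ≤ b → a ≤ j → j ≤ b → w i = w j

/-- A maximal flat interval: flat, and not properly contained in a flat interval. -/
def IsMaxFlat (n : ℕ) (w : ℕ → ℤ) (a b : ℕ) : Prop :=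
  IsFlat n w a b ∧ ∀ a' b', a' ≤ a → b ≤ b' → IsFlat n w a' b' → a' = a ∧ b' = b

/-- `|F_w|`: the number of maximal flat intervals of `w` over `[0, n+1]`. -/
noncomputable def numFlat (n : ℕ) (w : ℕ → ℤ) : ℕ :=
  Nat.card {p : ℕ × ℕ // IsMaxFlat n w p.1 p.2}

-- characterization
lemma isMaxFlat_iff (n : ℕ) (w : ℕ → ℤ) (a b : ℕ) :
    IsMaxFlat n w a b ↔
      (a ≤ b ∧ b ≤ n + 1 ∧ (∀ i, a ≤ i → i ≤ b → w i = w a) ∧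
        (a = 0 ∨ w (a - 1) ≠ w a) ∧ (b = n + 1 ∨ w b ≠ w (b + 1))) := by
  constructor
  · rintro ⟨⟨hab, hbn, hflat⟩, hmax⟩
    refine ⟨hab, hbn, fun i h1 h2 => hflat i a h1 h2 le_rfl hab, ?_, ?_⟩
    · by_contra h
      push_neg at h
      obtain ⟨ha, heq⟩ := h
      have key : ∀ i, a - 1 ≤ i → i ≤ b → w i = w a := by
        intro i hi hib
        rcases Nat.eq_or_lt_of_le hi with h | h
        · have : i = a - 1 := h.symm
          rw [this, heq]
        · exact hflat i a (by omega) hib le_rfl hab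
      have h1 : IsFlat n w (a - 1) b :=
        ⟨by omega, hbn, fun i j hi hib hj hjb => by rw [key i hi hib, key j hj hjb]⟩
      have := (hmax (a - 1) b (by omega) le_rfl h1).1
      omega
    · by_contra h
      push_neg at h
      obtain ⟨hb, heq⟩ := h
      have key : ∀ i, a ≤ i → i ≤ b + 1 → w i = w a := by
        intro i hi hib
        rcases Nat.eq_or_lt_of_le hib with h | h
        · rw [h, ← heq]
          exact hflat b a hab le_rfl le_rfl hab
        · exact hflat i a hi (by omega) le_rfl hab
      have h1 : IsFlat n w a (b + 1) :=
        ⟨by omega, by omega, fun i j hi hib hj hjb => by rw [key i hi hib, key j hj hjb]⟩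
      have := (hmax a (b + 1) le_rfl (by omega) h1).2
      omega
  · rintro ⟨hab, hbn, hflat, hl, hr⟩
    refine ⟨⟨hab, hbn, fun i j hi hib hj hjb => by rw [hflat i hi hib, hflat j hj hjb]⟩, ?_⟩
    rintro a' b' ha' hb' ⟨h1, h2, h3⟩
    constructor
    · by_contra h
      have ha1 : a' < a := by omega
      have : w (a - 1) = w a := h3 (a - 1) a (by omega) (by omega) (by omega) (by omega)
      rcases hl with h0 | hne
      · omega
      · exact hne this
    · by_contra h
      have hb1 : b < b' := by omega
      have : w b = w (b + 1) := h3 b (b + 1) (by omega) (by omega) (by omega) (by omega)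
      rcases hr with h0 | hne
      · omega
      · exact hne this

lemma numFlat_eq_of_bij (n : ℕ) (w : ℕ → ℤ) (m : ℕ) (g : ℕ → ℕ × ℕ)
    (hg : ∀ t1 t2, t1 ≤ m → t2 ≤ m → g t1 = g t2 → t1 = t2)
    (hset : ∀ p : ℕ × ℕ, IsMaxFlat n w p.1 p.2 ↔ ∃ t ≤ m, g t = p) :
    numFlat n w = m + 1 := by
  have hf : ∀ t : Fin (m + 1), IsMaxFlat n w (g t).1 (g t).2 := by
    intro t
    rw [hset]
    exact ⟨t, by omega, rfl⟩
  have hbij : Function.Bijective (fun t : Fin (m + 1) =>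
      (⟨g t, hf t⟩ : {p : ℕ × ℕ // IsMaxFlat n w p.1 p.2})) := by
    constructor
    · intro t1 t2 h
      have : g t1 = g t2 := congrArg Subtype.val h
      exact Fin.ext (hg t1 t2 (by omega) (by omega) this)
    · rintro ⟨p, hp⟩
      obtain ⟨t, ht, rfl⟩ := (hset p).1 hp
      exact ⟨⟨t, by omega⟩, rfl⟩
  have := Nat.card_eq_of_bijective _ hbij
  simp only [Nat.card_eq_fintype_card, Fintype.card_fin] at this
  unfold numFlat
  omega

def Wfun (k j : ℕ) : ℕ → ℤ := fun i => max (min (i : ℤ) (2 * k - i) - j) 0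

def gfun (k j : ℕ) : ℕ → ℕ × ℕ :=
  fun t => (if t = 0 then 0 else j + t, if t = 2 * k - 2 * j then 2 * k else j + t)

lemma maxflat_W (k j : ℕ) (hk : 1 ≤ k) (hj : j ≤ k) (p : ℕ × ℕ) :
    IsMaxFlat (2 * k - 1) (Wfun k j) p.1 p.2 ↔ ∃ t ≤ 2 * k - 2 * j, gfun k j t = p := by
  obtain ⟨a, b⟩ := p
  rw [isMaxFlat_iff]
  simp only [Wfun, gfun, Prod.mk.injEq]
  constructor
  · rintro ⟨hab, hbn, hflat, hl, hr⟩
    have hla : a = 0 ∨ (j + 1 ≤ a ∧ a ≤ 2 * k - j) := by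
      rcases hl with h | h
      · left; exact h
      · right; omega
    have hrb : b = 2 * k ∨ (j ≤ b ∧ b ≤ 2 * k - j - 1) := by
      rcases hr with h | h
      · left; omega
      · right; omega
    rcases hla with rfl | ⟨ha1, ha2⟩
    · -- a = 0
      rcases Nat.lt_or_ge j k with hjk | hjk
      · -- j < k : b = j
        have hbj : b ≤ j := by
          by_contra h
          push_neg at h
          have h1 := hflat (j + 1) (by omega) (by omega)
          omega
        refine ⟨0, by omega, ?_, ?_⟩
        · rw [if_pos rfl]
        · rw [if_neg (by omega)]; omega
      · -- j = k : b = 2k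
        have hb : b = 2 * k := by
          rcases hrb with h | h
          · exact h
          · rcases hr with h' | h'
            · omega
            · exfalso; apply h'; omega
        refine ⟨0, by omega, ?_, ?_⟩
        · rw [if_pos rfl]
        · rw [if_pos (by omega)]; omega
    · -- j + 1 ≤ a ≤ 2k - j, hence j < k
      have hjk : j < k := by omega
      rcases Nat.lt_or_ge a (2 * k - j) with ha3 | ha3
      · -- a ≤ 2k - j - 1 : singleton
        have hb : b = a := by
          by_contra h
          have h1 := hflat (a + 1) (by omega) (by omega)
          omega
        refine ⟨a - j, by omega, ?_, ?_⟩
        · rw [if_neg (by omega)]; omega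
        · rw [if_neg (by omega)]; omega
      · -- a = 2k - j : right block
        have hb : b = 2 * k := by
          rcases hrb with h | h
          · exact h
          · omega
        refine ⟨2 * k - 2 * j, by omega, ?_, ?_⟩
        · rw [if_neg (by omega)]; omega
        · rw [if_pos rfl]; omega
  · rintro ⟨t, htm, h1, h2⟩
    by_cases ht0 : t = 0 <;> by_cases htm' : t = 2 * k - 2 * j
    · -- t = 0 = m : j = k, p = (0, 2k)
      have hjk : j = k := by omega
      rw [if_pos ht0] at h1
      rw [if_pos htm'] at h2
      refine ⟨by omega, by omega, ?_, ?_, ?_⟩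
      · intro i hi hib; omega
      · left; omega
      · left; omega
    · -- t = 0, m > 0 : j < k, p = (0, j)
      have hjk : j < k := by omega
      rw [if_pos ht0] at h1
      rw [if_neg htm'] at h2
      refine ⟨by omega, by omega, ?_, ?_, ?_⟩
      · intro i hi hib; omega
      · left; omega
      · right; omega
    · -- t = m ≠ 0 : j < k, p = (2k - j, 2k)
      have hjk : j < k := by omega
      rw [if_neg ht0] at h1
      rw [if_pos htm'] at h2
      refine ⟨by omega, by omega, ?_, ?_, ?_⟩
      · intro i hi hib; omega
      · right; omega
      · left; omega
    · -- middle : singleton (j+t, j+t), 1 ≤ t ≤ m - 1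
      have hjk : j < k := by omega
      rw [if_neg ht0] at h1
      rw [if_neg htm'] at h2
      refine ⟨by omega, by omega, ?_, ?_, ?_⟩
      · intro i hi hib; omega
      · right; omega
      · right; omega

def theE (k : ℕ) : List Event := (List.range k).map (fun m => (m + 1, 2 * k - m - 1, (-1 : ℤ)))

lemma seqCost_any_eq_length {n : ℕ} (L : List Event)
    (hL : ∀ e ∈ L, ∃ i : Fin n, e.1 ≤ (i : ℕ) + 1 ∧ (i : ℕ) + 1 ≤ e.2.1) (u : CNP n) :
    seqCost anyCost u L = (L.length : ℕ∞) := by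
  induction L generalizing u with
  | nil => simp [seqCost]
  | cons e L ih =>
    obtain ⟨i, hi⟩ := hL e (by simp)
    have hne : (Finset.univ.filter
        (fun i : Fin n => e.1 ≤ (i : ℕ) + 1 ∧ (i : ℕ) + 1 ≤ e.2.1)).Nonempty :=
      ⟨i, by simp [hi]; omega⟩
    have hcost : eventCost anyCost u e = 1 := by
      unfold eventCost anyCost
      exact Finset.sup_const hne 1
    rw [seqCost, hcost, ih (fun e' he' => hL e' (by simp [he']))]
    simp only [List.length_cons]
    push_cast
    ring


/-- for the symmetric-staircase family, where `u - v = (1,2,...,k-1,k,k-1,...,2,1)`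
(dimension `2k - 1`) and `u, v` have no null positions, there is a sequence of `k` events
transforming `u` into `v`, each reducing the number of maximal flat intervals of the
difference vector by 2; in particular `dist_any(u, v) ≤ k`. -/
theorem stmt11 (k : ℕ) (hk : 1 ≤ k) (u v : CNP (2 * k - 1))
    (hu : ∀ i, 0 < u i) (hv : ∀ i, 0 < v i)
    (hw : ∀ i : Fin (2 * k - 1),
      (u i : ℤ) - (v i : ℤ) = min ((i : ℕ) + 1 : ℤ) ((2 * k : ℤ) - ((i : ℕ) + 1))) :
    (∃ E : List Event, (∀ e ∈ E, ValidEvent (2 * k - 1) e) ∧ E.length = k ∧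
      applySeq u E = v ∧
      ∀ j, j < k →
        numFlat (2 * k - 1) (diffExt (applySeq u (E.take (j + 1))) v) =
          numFlat (2 * k - 1) (diffExt (applySeq u (E.take j)) v) - 2) ∧
    distAny u v ≤ (k : ℕ∞) := by
  -- key computation of applySeq on prefixes
  have key : ∀ j, j ≤ k → applySeq u ((theE k).take j) =
      fun i : Fin (2 * k - 1) => v i + (min ((i : ℕ) + 1) (2 * k - ((i : ℕ) + 1)) - j) := by
    intro j
    induction j with
    | zero =>
      intro _
      funext i
      have hwi := hw i
      have hi := i.isLt
      simp only [List.take_zero, applySeq, List.foldl_nil]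
      omega
    | succ j ih =>
      intro hjk
      have hstep : (theE k).take (j + 1) = (theE k).take j ++ [(j + 1, 2 * k - j - 1, (-1 : ℤ))] := by
        rw [List.take_succ]
        congr 1
        simp [theE, List.getElem?_map, List.getElem?_range, (by omega : j < k)]
      rw [hstep]
      unfold applySeq
      rw [List.foldl_append]
      have ihj := ih (by omega)
      unfold applySeq at ihj
      rw [ihj]
      funext i
      simp only [List.foldl_cons, List.foldl_nil, applyEvent]
      have hvi := hv i
      have hi := i.isLt
      split <;> omega
  have htake : (theE k).take k = theE k := by
    apply List.take_of_length_le
    simp [theE]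
  have happly : applySeq u (theE k) = v := by
    rw [← htake, key k le_rfl]
    funext i
    have hi := i.isLt
    omega
  have hvalid : ∀ e ∈ theE k, ValidEvent (2 * k - 1) e := by
    intro e he
    simp only [theE, List.mem_map, List.mem_range] at he
    obtain ⟨m, hm, rfl⟩ := he
    exact ⟨by show 1 ≤ m + 1; omega, by show m + 1 ≤ 2 * k - m - 1; omega,
      by show 2 * k - m - 1 ≤ 2 * k - 1; omega, by show (-1 : ℤ) ≠ 0; norm_num⟩
  have hdiff : ∀ j, j ≤ k → diffExt (applySeq u ((theE k).take j)) v = Wfun k j := by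
    intro j hjk
    rw [key j hjk]
    funext i
    simp only [diffExt, Wfun]
    split
    · omega
    · omega
  have hnum : ∀ j, j ≤ k → numFlat (2 * k - 1) (Wfun k j) = 2 * k + 1 - 2 * j := by
    intro j hjk
    have := numFlat_eq_of_bij (2 * k - 1) (Wfun k j) (2 * k - 2 * j) (gfun k j)
      (fun t1 t2 h1 h2 heq => by
        simp only [gfun, Prod.mk.injEq] at heq
        split_ifs at heq <;> omega)
      (fun p => maxflat_W k j hk hjk p)
    omega
  constructor
  · refine ⟨theE k, hvalid, by simp [theE], happly, ?_⟩
    intro j hjk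
    rw [hdiff (j + 1) (by omega), hdiff j (by omega), hnum (j + 1) (by omega), hnum j (by omega)]
    omega
  · have hcost : seqCost anyCost u (theE k) = (k : ℕ∞) := by
      rw [seqCost_any_eq_length]
      · simp [theE]
      · intro e he
        simp only [theE, List.mem_map, List.mem_range] at he
        obtain ⟨m, hm, rfl⟩ := he
        exact ⟨⟨m, by omega⟩, by simp; omega⟩
    exact sInf_le ⟨theE k, hvalid, happly, hcost⟩
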